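/- Let a_X, a_Y > −1, b_X, b_Y > 0, and let X and Y be independent random variables, where X is the square of a Gamma(a_X+1, b_X) random variable and Y is the square of a Gamma(a_Y+1, b_Y) random variable. Let λ, β, P, c > 0, a_m, a_n > 0 and γ > 0 with a_m > γ·a_n, and set U = β·P·X·Y/(λ·c). Then the outage probability of the distant user satisfies ℙ( a_m·U/(a_n·U + 1) < γ ) = (1/Γ(a_X+1)) ∫_0^∞ t^{a_X}·e^{−t} · (γ(a_Y+1, √(λ·γ·c/(β·P·(a_m − γ·a_n)))/(b_X·b_Y·t))/Γ(a_Y+1)) dt, where γ(s,x) = ∫_0^x u^{s−1}·e^{−u} du is the lower incomplete gamma function. -/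

import Mathlib

open MeasureTheory ProbabilityTheory

/-- Density of the square of a `Gamma(a+1, b)` random variable:
`x ↦ x^{(a−1)/2}·e^{−√x/b}/(2·b^{a+1}·Γ(a+1))` on `(0,∞)`. -/
noncomputable def sqGammaDensity (a b x : ℝ) : ℝ :=
  if 0 < x then
    x ^ ((a - 1) / 2) * Real.exp (-Real.sqrt x / b) / (2 * b ^ (a + 1) * Real.Gamma (a + 1))
  else 0

/-- The lower incomplete gamma function `γ(s, x) = ∫_0^x u^{s−1}·e^{−u} du`. -/
noncomputable def lincGamma (s x : ℝ) : ℝ :=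
  ∫ u in (0 : ℝ)..x, u ^ (s - 1) * Real.exp (-u)

lemma measurable_rpow_const_aux (a : ℝ) : Measurable fun t : ℝ => t ^ a := by measurability

lemma measurable_sqGammaDensity (a b : ℝ) : Measurable (sqGammaDensity a b) := by
  unfold sqGammaDensity
  apply Measurable.ite measurableSet_Ioi
  · apply Measurable.div_const
    apply Measurable.mul
    · measurability
    · exact (((Real.continuous_sqrt.measurable.neg).div_const b).exp)
  · exact measurable_const

lemma lincGamma_nonneg {s x : ℝ} (hx : 0 ≤ x) : 0 ≤ lincGamma s x := by
  apply intervalIntegral.integral_nonneg hx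
  intro u hu
  exact mul_nonneg (Real.rpow_nonneg hu.1 _) (Real.exp_nonneg _)

lemma gammaIntegrand_integrableOn {s : ℝ} (hs : 0 < s) :
    IntegrableOn (fun u : ℝ => u ^ (s - 1) * Real.exp (-u)) (Set.Ioi 0) := by
  have := Real.GammaIntegral_convergent hs
  exact this.congr_fun (fun u hu => by ring) measurableSet_Ioi

lemma lincGamma_mono {s : ℝ} (hs : 0 < s) : MonotoneOn (lincGamma s) (Set.Ici 0) := by
  intro x hx y hy hxy
  unfold lincGamma
  rw [intervalIntegral.integral_of_le hx, intervalIntegral.integral_of_le (le_trans hx hxy)]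
  apply setIntegral_mono_set ((gammaIntegrand_integrableOn hs).mono_set Set.Ioc_subset_Ioi_self)
  · filter_upwards [self_mem_ae_restrict measurableSet_Ioc] with u hu
    exact mul_nonneg (Real.rpow_nonneg hu.1.le _) (Real.exp_nonneg _)
  · exact Filter.Eventually.of_forall (Set.Ioc_subset_Ioc_right hxy)
open scoped ENNReal


lemma lintegral_image_eq_lintegral_abs_deriv_mul' {s : Set ℝ} {f f' : ℝ → ℝ}
    (hs : MeasurableSet s) (hf' : ∀ x ∈ s, HasDerivWithinAt f (f' x) s x)
    (hf : Set.InjOn f s) (g : ℝ → ℝ≥0∞) :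
    ∫⁻ x in f '' s, g x = ∫⁻ x in s, ENNReal.ofReal |f' x| * g (f x) := by
  simpa only [ContinuousLinearMap.det_toSpanSingleton] using
    lintegral_image_eq_lintegral_abs_det_fderiv_mul volume hs
      (fun x hx => (hf' x hx).hasFDerivWithinAt) hf g

lemma sq_strictMonoOn {b : ℝ} (hb : 0 < b) :
    StrictMonoOn (fun u : ℝ => b ^ 2 * u ^ 2) (Set.Ici 0) := by
  intro u hu v hv huv
  show b ^ 2 * u ^ 2 < b ^ 2 * v ^ 2
  have hu0 : (0:ℝ) ≤ u := hu
  exact mul_lt_mul_of_pos_left (pow_lt_pow_left₀ huv hu0 two_ne_zero) (by positivity)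

lemma sq_image_Ioo {b z : ℝ} (hb : 0 < b) (hz : 0 < z) :
    (fun u : ℝ => b ^ 2 * u ^ 2) '' Set.Ioo 0 z = Set.Ioo 0 (b ^ 2 * z ^ 2) := by
  ext y
  constructor
  · rintro ⟨u, ⟨hu0, huz⟩, rfl⟩
    refine ⟨by positivity, ?_⟩
    show b ^ 2 * u ^ 2 < b ^ 2 * z ^ 2
    exact mul_lt_mul_of_pos_left (pow_lt_pow_left₀ huz hu0.le two_ne_zero) (by positivity)
  · rintro ⟨hy0, hyz⟩
    refine ⟨Real.sqrt y / b, ⟨by positivity, ?_⟩, ?_⟩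
    · rw [div_lt_iff₀ hb]
      have h1 : Real.sqrt y < Real.sqrt (b ^ 2 * z ^ 2) := Real.sqrt_lt_sqrt hy0.le hyz
      have h2 : Real.sqrt (b ^ 2 * z ^ 2) = b * z := by
        rw [show b ^ 2 * z ^ 2 = (b * z) ^ 2 by ring, Real.sqrt_sq (by positivity)]
      nlinarith
    · show b ^ 2 * (Real.sqrt y / b) ^ 2 = y
      rw [div_pow, Real.sq_sqrt hy0.le]
      field_simp

lemma sq_image_Ioi {b : ℝ} (hb : 0 < b) :
    (fun u : ℝ => b ^ 2 * u ^ 2) '' Set.Ioi 0 = Set.Ioi 0 := by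
  ext y
  constructor
  · rintro ⟨u, hu, rfl⟩
    have hu0 : (0:ℝ) < u := hu
    show (0:ℝ) < b ^ 2 * u ^ 2
    positivity
  · intro hy
    have hy0 : (0:ℝ) < y := hy
    refine ⟨Real.sqrt y / b, Set.mem_Ioi.mpr (by positivity), ?_⟩
    show b ^ 2 * (Real.sqrt y / b) ^ 2 = y
    rw [div_pow, Real.sq_sqrt (le_of_lt hy)]
    field_simp

lemma sq_hasDeriv {b : ℝ} (u : ℝ) :
    HasDerivAt (fun u : ℝ => b ^ 2 * u ^ 2) (b ^ 2 * (2 * u)) u := by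
  simpa using (hasDerivAt_pow 2 u).const_mul (b ^ 2)

lemma sqGammaDensity_sub {a b : ℝ} (ha : -1 < a) (hb : 0 < b) {u : ℝ} (hu : 0 < u) :
    |b ^ 2 * (2 * u)| * sqGammaDensity a b (b ^ 2 * u ^ 2) =
      u ^ a * Real.exp (-u) / Real.Gamma (a + 1) := by
  have hbu : 0 < b * u := mul_pos hb hu
  have h1 : b ^ 2 * u ^ 2 = (b * u) ^ 2 := by ring
  have hx : 0 < b ^ 2 * u ^ 2 := by positivity
  have habs : |b ^ 2 * (2 * u)| = b ^ 2 * (2 * u) := abs_of_pos (by positivity)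
  rw [habs, sqGammaDensity, if_pos hx, h1, Real.sqrt_sq hbu.le]
  have e1 : ((b * u) ^ 2 : ℝ) ^ ((a - 1) / 2) = (b * u) ^ (a - 1) := by
    rw [← Real.rpow_natCast (b * u) 2, ← Real.rpow_mul hbu.le]
    congr 1
    push_cast
    ring
  have e2 : -(b * u) / b = -u := by field_simp
  have e3 : (b * u) ^ (a - 1) = b ^ (a - 1) * u ^ (a - 1) := Real.mul_rpow hb.le hu.le
  rw [e1, e2, e3]
  have e4 : b ^ (a + 1) = b ^ (2 : ℕ) * b ^ (a - 1) := by
    rw [← Real.rpow_natCast b 2, ← Real.rpow_add hb]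
    congr 1
    push_cast
    ring
  have e5 : u ^ a = u * u ^ (a - 1) := by
    nth_rewrite 2 [← Real.rpow_one u]
    rw [← Real.rpow_add hu]
    congr 1
    ring
  rw [e4, e5]
  have hb1 : (b : ℝ) ^ (a - 1) ≠ 0 := (Real.rpow_pos_of_pos hb _).ne'
  have hΓ : Real.Gamma (a + 1) ≠ 0 := (Real.Gamma_pos_of_pos (by linarith)).ne'
  field_simp

lemma integrable_gamma_Ioo {s z : ℝ} (hs : 0 < s) (c : ℝ) :
    IntegrableOn (fun u : ℝ => u ^ (s - 1) * Real.exp (-u) / c) (Set.Ioo 0 z) := by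
  exact ((gammaIntegrand_integrableOn hs).mono_set Set.Ioo_subset_Ioi_self).div_const c

lemma lincGamma_eq_Ioo {s z : ℝ} (hz : 0 ≤ z) :
    lincGamma s z = ∫ u in Set.Ioo 0 z, u ^ (s - 1) * Real.exp (-u) := by
  rw [lincGamma, intervalIntegral.integral_of_le hz, integral_Ioc_eq_integral_Ioo]

lemma sqGamma_cdf {a b : ℝ} (ha : -1 < a) (hb : 0 < b) {r : ℝ} (hr : 0 < r) :
    (volume.withDensity fun x => ENNReal.ofReal (sqGammaDensity a b x)) (Set.Iio r)
      = ENNReal.ofReal (lincGamma (a + 1) (Real.sqrt r / b) / Real.Gamma (a + 1)) := by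
  set z := Real.sqrt r / b with hzdef
  have hz : 0 < z := by positivity
  rw [withDensity_apply _ measurableSet_Iio]
  have hsplit : Set.Iio r = Set.Iic 0 ∪ Set.Ioo 0 r := by
    ext x
    simp only [Set.mem_Iio, Set.mem_Iic, Set.mem_union, Set.mem_Ioo]
    constructor
    · intro hx
      rcases le_or_gt x 0 with h | h
      · exact Or.inl h
      · exact Or.inr ⟨h, hx⟩
    · rintro (h | ⟨_, h⟩)
      · exact lt_of_le_of_lt h hr
      · exact h
  have hdisj : Disjoint (Set.Iic (0:ℝ)) (Set.Ioo 0 r) :=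
    (Set.Iic_disjoint_Ioi (le_refl 0)).mono_right Set.Ioo_subset_Ioi_self
  rw [hsplit, lintegral_union measurableSet_Ioo hdisj]
  have h0 : ∫⁻ x in Set.Iic (0:ℝ), ENNReal.ofReal (sqGammaDensity a b x) = 0 := by
    have hz0 : ∀ x ∈ Set.Iic (0:ℝ), ENNReal.ofReal (sqGammaDensity a b x) = 0 := by
      intro x hx
      rw [sqGammaDensity, if_neg (not_lt.mpr hx)]
      exact ENNReal.ofReal_zero
    rw [setLIntegral_congr_fun measurableSet_Iic hz0, lintegral_zero]
  rw [h0, zero_add]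
  have himg : (fun u : ℝ => b ^ 2 * u ^ 2) '' Set.Ioo 0 z = Set.Ioo 0 r := by
    rw [sq_image_Ioo hb hz]
    congr 1
    rw [hzdef, div_pow, Real.sq_sqrt hr.le]
    field_simp
  have hinj : Set.InjOn (fun u : ℝ => b ^ 2 * u ^ 2) (Set.Ioo 0 z) :=
    (sq_strictMonoOn hb).injOn.mono (fun x hx => le_of_lt hx.1)
  rw [← himg, lintegral_image_eq_lintegral_abs_deriv_mul' measurableSet_Ioo
      (fun x _ => (sq_hasDeriv x).hasDerivWithinAt) hinj]
  have hcong : ∀ u ∈ Set.Ioo (0:ℝ) z,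
      ENNReal.ofReal |b ^ 2 * (2 * u)| * ENNReal.ofReal (sqGammaDensity a b (b ^ 2 * u ^ 2))
        = ENNReal.ofReal (u ^ a * Real.exp (-u) / Real.Gamma (a + 1)) := by
    intro u hu
    rw [← ENNReal.ofReal_mul (abs_nonneg _), sqGammaDensity_sub ha hb hu.1]
  rw [setLIntegral_congr_fun measurableSet_Ioo hcong]
  have hint : IntegrableOn (fun u : ℝ => u ^ a * Real.exp (-u) / Real.Gamma (a + 1))
      (Set.Ioo 0 z) := by
    have := integrable_gamma_Ioo (show (0:ℝ) < a + 1 by linarith) (z := z) (Real.Gamma (a + 1))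
    simpa using this
  have hnn : 0 ≤ᵐ[volume.restrict (Set.Ioo 0 z)]
      fun u : ℝ => u ^ a * Real.exp (-u) / Real.Gamma (a + 1) := by
    filter_upwards [self_mem_ae_restrict measurableSet_Ioo] with u hu
    have hΓ : 0 < Real.Gamma (a + 1) := Real.Gamma_pos_of_pos (by linarith)
    have hu0 : (0:ℝ) < u := hu.1
    positivity
  rw [← ofReal_integral_eq_lintegral_ofReal hint hnn]
  congr 1
  rw [lincGamma_eq_Ioo hz.le, ← integral_div]
  apply setIntegral_congr_fun measurableSet_Ioo
  intro u hu
  simp [add_sub_cancel_right]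

lemma sqGamma_Iic_zero (a b : ℝ) :
    (volume.withDensity fun x => ENNReal.ofReal (sqGammaDensity a b x)) (Set.Iic 0) = 0 := by
  rw [withDensity_apply _ measurableSet_Iic]
  have hz0 : ∀ x ∈ Set.Iic (0:ℝ), ENNReal.ofReal (sqGammaDensity a b x) = 0 := fun x hx => by
    rw [sqGammaDensity, if_neg (not_lt.mpr hx)]; exact ENNReal.ofReal_zero
  rw [setLIntegral_congr_fun measurableSet_Iic hz0, lintegral_zero]

/-- exact (pre-quadrature) form of Theorem 2 of the paper: the outage
probability of the distant user, whose SINR is `a_m·U/(a_n·U + 1)` with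
`U = β·P·X·Y/(λ·c)`. -/
theorem outage_Dm {α : Type*} [MeasurableSpace α]
    (μ : Measure α) [IsProbabilityMeasure μ]
    (aX aY bX bY : ℝ) (haX : -1 < aX) (haY : -1 < aY) (hbX : 0 < bX) (hbY : 0 < bY)
    (X Y : α → ℝ) (hX : Measurable X) (hY : Measurable Y)
    (hXY : IndepFun X Y μ)
    (hXlaw : Measure.map X μ =
      volume.withDensity (fun x => ENNReal.ofReal (sqGammaDensity aX bX x)))
    (hYlaw : Measure.map Y μ =
      volume.withDensity (fun y => ENNReal.ofReal (sqGammaDensity aY bY y)))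
    (lam β P c am an g : ℝ) (hlam : 0 < lam) (hβ : 0 < β) (hP : 0 < P) (hc : 0 < c)
    (ham : 0 < am) (han : 0 < an) (hg : 0 < g) (hcond : g * an < am)
    (U : α → ℝ) (hU : U = fun ω => β * P * X ω * Y ω / (lam * c)) :
    (μ {ω | am * U ω / (an * U ω + 1) < g}).toReal =
      (1 / Real.Gamma (aX + 1)) *
        ∫ t in Set.Ioi (0 : ℝ),
          t ^ aX * Real.exp (-t) *
            (lincGamma (aY + 1)
                (Real.sqrt (lam * g * c / (β * P * (am - g * an))) / (bX * bY * t)) /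
              Real.Gamma (aY + 1)) := by
  have hD : 0 < am - g * an := by linarith
  set S : ℝ := lam * g * c / (β * P * (am - g * an)) with hSdef
  have hS : 0 < S := by positivity
  set ρY : Measure ℝ :=
    volume.withDensity (fun y => ENNReal.ofReal (sqGammaDensity aY bY y)) with hρY
  have hprobY : IsProbabilityMeasure ρY := hYlaw ▸ Measure.isProbabilityMeasure_map hY.aemeasurable
  have hΓX : 0 < Real.Gamma (aX + 1) := Real.Gamma_pos_of_pos (by linarith)
  have hΓY : 0 < Real.Gamma (aY + 1) := Real.Gamma_pos_of_pos (by linarith)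
  -- Step A: rewrite the event
  have hXpos : ∀ᵐ ω ∂μ, 0 < X ω := by
    rw [ae_iff]
    have : {ω | ¬ 0 < X ω} = X ⁻¹' Set.Iic 0 := by
      ext ω; simp [not_lt]
    rw [this, ← Measure.map_apply hX measurableSet_Iic, hXlaw, sqGamma_Iic_zero]
  have hYpos : ∀ᵐ ω ∂μ, 0 < Y ω := by
    rw [ae_iff]
    have : {ω | ¬ 0 < Y ω} = Y ⁻¹' Set.Iic 0 := by
      ext ω; simp [not_lt]
    rw [this, ← Measure.map_apply hY measurableSet_Iic, hYlaw, sqGamma_Iic_zero]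
  have hae : {ω | am * U ω / (an * U ω + 1) < g} =ᵐ[μ] {ω | X ω * Y ω < S} := by
    rw [Filter.eventuallyEq_set]
    filter_upwards [hXpos, hYpos] with ω hx hy
    simp only [Set.mem_setOf_eq, hU]
    set x := X ω
    set y := Y ω
    have hu : 0 < β * P * x * y / (lam * c) := by positivity
    have h1 : 0 < an * (β * P * x * y / (lam * c)) + 1 := by positivity
    rw [div_lt_iff₀ h1]
    have hlc : 0 < lam * c := by positivity
    have hbpd : 0 < β * P * (am - g * an) := by positivity
    rw [hSdef, lt_div_iff₀ hbpd]
    constructor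
    · intro h
      have h2 : (am - g * an) * (β * P * x * y / (lam * c)) < g := by nlinarith
      have h3 : (am - g * an) * (β * P * x * y) / (lam * c) < g := by
        rwa [← mul_div_assoc] at h2
      rw [div_lt_iff₀ hlc] at h3
      nlinarith
    · intro h
      have h3 : (am - g * an) * (β * P * x * y) / (lam * c) < g := by
        rw [div_lt_iff₀ hlc]; nlinarith
      rw [mul_div_assoc] at h3
      nlinarith
  rw [measure_congr hae]
  -- Step B: product measure
  have hA : MeasurableSet {p : ℝ × ℝ | p.1 * p.2 < S} :=
    measurableSet_lt (measurable_fst.mul measurable_snd) measurable_const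
  have hpair : μ.map (fun ω => (X ω, Y ω)) = (μ.map X).prod (μ.map Y) :=
    (indepFun_iff_map_prod_eq_prod_map_map hX.aemeasurable hY.aemeasurable).mp hXY
  have hev : {ω | X ω * Y ω < S} = (fun ω => (X ω, Y ω)) ⁻¹' {p : ℝ × ℝ | p.1 * p.2 < S} := rfl
  rw [hev, ← Measure.map_apply (hX.prodMk hY) hA, hpair, hXlaw, hYlaw,
    Measure.prod_apply hA]
  -- Step C: lintegral over the X density
  have hdX : Measurable fun x => ENNReal.ofReal (sqGammaDensity aX bX x) :=
    (measurable_sqGammaDensity aX bX).ennreal_ofReal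
  have hGmeas : Measurable fun x : ℝ => ρY (Prod.mk x ⁻¹' {p : ℝ × ℝ | p.1 * p.2 < S}) :=
    measurable_measure_prodMk_left hA
  rw [lintegral_withDensity_eq_lintegral_mul volume hdX hGmeas]
  -- drop the nonpositive part of the outer integral
  simp only [Pi.mul_apply]
  rw [← lintegral_add_compl (fun x => ENNReal.ofReal (sqGammaDensity aX bX x) *
      ρY (Prod.mk x ⁻¹' {p : ℝ × ℝ | p.1 * p.2 < S})) (measurableSet_Ioi (a := (0:ℝ)))]
  have hcompl : (Set.Ioi (0:ℝ))ᶜ = Set.Iic 0 := by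
    ext x; simp [not_lt]
  rw [hcompl]
  have hIic : ∫⁻ x in Set.Iic (0:ℝ), ENNReal.ofReal (sqGammaDensity aX bX x) *
      ρY (Prod.mk x ⁻¹' {p : ℝ × ℝ | p.1 * p.2 < S}) = 0 := by
    have hz0 : ∀ x ∈ Set.Iic (0:ℝ), ENNReal.ofReal (sqGammaDensity aX bX x) *
        ρY (Prod.mk x ⁻¹' {p : ℝ × ℝ | p.1 * p.2 < S}) = 0 := by
      intro x hx
      rw [sqGammaDensity, if_neg (not_lt.mpr hx), ENNReal.ofReal_zero, zero_mul]
    rw [setLIntegral_congr_fun measurableSet_Iic hz0, lintegral_zero]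
  rw [hIic, add_zero]
  -- rewrite the integrand on (0,∞) using the CDF of Y
  have hIoi : ∀ x ∈ Set.Ioi (0:ℝ), ENNReal.ofReal (sqGammaDensity aX bX x) *
      ρY (Prod.mk x ⁻¹' {p : ℝ × ℝ | p.1 * p.2 < S})
      = ENNReal.ofReal (sqGammaDensity aX bX x) *
        ENNReal.ofReal (lincGamma (aY + 1) (Real.sqrt (S / x) / bY) / Real.Gamma (aY + 1)) := by
    intro x hx
    have hx0 : (0:ℝ) < x := hx
    have hpre : Prod.mk x ⁻¹' {p : ℝ × ℝ | p.1 * p.2 < S} = Set.Iio (S / x) := by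
      ext y
      simp only [Set.mem_preimage, Set.mem_setOf_eq, Set.mem_Iio]
      rw [lt_div_iff₀ hx0, mul_comm]
    rw [hpre, hρY, sqGamma_cdf haY hbY (div_pos hS hx0)]
  rw [setLIntegral_congr_fun measurableSet_Ioi hIoi]
  -- substitute x = bX² t²
  rw [← sq_image_Ioi hbX, lintegral_image_eq_lintegral_abs_deriv_mul' measurableSet_Ioi
      (fun t _ => (sq_hasDeriv t).hasDerivWithinAt)
      ((sq_strictMonoOn hbX).injOn.mono (fun t (ht : t ∈ Set.Ioi (0:ℝ)) => (le_of_lt ht : (0:ℝ) ≤ t)))]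
  have hsub : ∀ t ∈ Set.Ioi (0:ℝ),
      ENNReal.ofReal |bX ^ 2 * (2 * t)| *
        (ENNReal.ofReal (sqGammaDensity aX bX (bX ^ 2 * t ^ 2)) *
          ENNReal.ofReal
            (lincGamma (aY + 1) (Real.sqrt (S / (bX ^ 2 * t ^ 2)) / bY) / Real.Gamma (aY + 1)))
      = ENNReal.ofReal (1 / Real.Gamma (aX + 1)) *
          ENNReal.ofReal (t ^ aX * Real.exp (-t) *
            (lincGamma (aY + 1) (Real.sqrt S / (bX * bY * t)) / Real.Gamma (aY + 1))) := by
    intro t ht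
    have ht0 : (0:ℝ) < t := ht
    have harg : Real.sqrt (S / (bX ^ 2 * t ^ 2)) / bY = Real.sqrt S / (bX * bY * t) := by
      rw [Real.sqrt_div hS.le, show bX ^ 2 * t ^ 2 = (bX * t) ^ 2 by ring,
        Real.sqrt_sq (by positivity), div_div]
      congr 1
      ring
    rw [harg, ← mul_assoc, ← ENNReal.ofReal_mul (abs_nonneg _),
      sqGammaDensity_sub haX hbX ht0, ← ENNReal.ofReal_mul (by positivity),
      ← ENNReal.ofReal_mul (by positivity)]
    congr 1
    ring
  rw [setLIntegral_congr_fun measurableSet_Ioi hsub,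
    lintegral_const_mul' _ _ ENNReal.ofReal_ne_top, ENNReal.toReal_mul,
    ENNReal.toReal_ofReal (by positivity)]
  congr 1
  -- convert the lintegral to a Bochner integral
  have hmono : AntitoneOn (fun t : ℝ => lincGamma (aY + 1) (Real.sqrt S / (bX * bY * t)))
      (Set.Ioi 0) := by
    intro t1 ht1 t2 ht2 h12
    have ht10 : (0:ℝ) < t1 := ht1
    have ht20 : (0:ℝ) < t2 := ht2
    have harg1 : 0 ≤ Real.sqrt S / (bX * bY * t2) := by positivity
    have harg2 : Real.sqrt S / (bX * bY * t2) ≤ Real.sqrt S / (bX * bY * t1) := by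
      apply div_le_div_of_nonneg_left (Real.sqrt_nonneg _) (by positivity)
      exact mul_le_mul_of_nonneg_left h12 (by positivity)
    exact lincGamma_mono (by linarith : (0:ℝ) < aY + 1)
      (Set.mem_Ici.mpr harg1) (Set.mem_Ici.mpr (le_trans harg1 harg2)) harg2
  have hsm : AEStronglyMeasurable
      (fun t : ℝ => t ^ aX * Real.exp (-t) *
        (lincGamma (aY + 1) (Real.sqrt S / (bX * bY * t)) / Real.Gamma (aY + 1)))
      (volume.restrict (Set.Ioi (0:ℝ))) := by
    apply AEMeasurable.aestronglyMeasurable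
    apply AEMeasurable.mul
    · exact ((measurable_rpow_const_aux aX).mul (measurable_neg.exp)).aemeasurable
    · exact (aemeasurable_restrict_of_antitoneOn measurableSet_Ioi hmono).div_const _
  have hnn : 0 ≤ᵐ[volume.restrict (Set.Ioi (0:ℝ))]
      fun t : ℝ => t ^ aX * Real.exp (-t) *
        (lincGamma (aY + 1) (Real.sqrt S / (bX * bY * t)) / Real.Gamma (aY + 1)) := by
    filter_upwards [self_mem_ae_restrict measurableSet_Ioi] with t ht
    have ht0 : (0:ℝ) < t := ht
    have h1 : 0 ≤ lincGamma (aY + 1) (Real.sqrt S / (bX * bY * t)) :=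
      lincGamma_nonneg (by positivity)
    have h2 : (0:ℝ) ≤ t ^ aX * Real.exp (-t) := by positivity
    exact mul_nonneg h2 (div_nonneg h1 hΓY.le)
  rw [sq_image_Ioi hbX, integral_eq_lintegral_of_nonneg_ae hnn hsm]
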